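/- Vanishing of the weighted second-order trace: if u is in the weighted space V²_a (i.e., u ∈ V¹_a and a·u' ∈ H¹(0,1)), with a satisfying the degeneracy assumptions with μ < 2, then lim_{x→0⁺} x·a(x)·u'(x)² = 0. -/

import Mathlib

open MeasureTheory Set Filter

theorem second_order_weighted_trace_vanishes
    (a ad : ℝ → ℝ) (μ : ℝ)
    (hcont : ContinuousOn a (Set.Icc 0 1))
    (hderiv : ∀ x ∈ Set.Ioc (0:ℝ) 1, HasDerivAt a (ad x) x)
    (hpos : ∀ x ∈ Set.Ioc (0:ℝ) 1, 0 < a x)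
    (ha0 : a 0 = 0)
    (hμ0 : 0 ≤ μ) (hμ2 : μ < 2)
    (hμ : ∀ x ∈ Set.Ioc (0:ℝ) 1, x * |ad x| ≤ μ * a x)
    (u ud w : ℝ → ℝ)
    (hu2 : MeasureTheory.IntegrableOn (fun x => (u x) ^ 2) (Set.Ioo 0 1))
    (huderiv : ∀ x ∈ Set.Ioc (0:ℝ) 1, HasDerivAt u (ud x) x)
    (hud2 : MeasureTheory.IntegrableOn (fun x => a x * (ud x) ^ 2) (Set.Ioo 0 1))
    (hau2 : MeasureTheory.IntegrableOn (fun x => (a x * ud x) ^ 2) (Set.Ioo 0 1))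
    (hwderiv : ∀ x ∈ Set.Ioc (0:ℝ) 1, HasDerivAt (fun y => a y * ud y) (w x) x)
    (hw2 : MeasureTheory.IntegrableOn (fun x => (w x) ^ 2) (Set.Ioo 0 1)) :
    Filter.Tendsto (fun x => x * a x * (ud x) ^ 2) (nhdsWithin 0 (Set.Ioi 0)) (nhds 0) := by
  have ha1 : (0:ℝ) < a 1 := hpos 1 ⟨one_pos, le_refl 1⟩
  set vd : ℝ → ℝ := fun t => a t * ud t ^ 2 + 2 * t * ud t * w t - t * ad t * ud t ^ 2
    with hvd_def
  set v : ℝ → ℝ := fun x => x * a x * ud x ^ 2 with hv_def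
  -- lower bound for a : a x ≥ a 1 * x ^ μ
  have hlow : ∀ x ∈ Set.Ioc (0:ℝ) 1, a 1 * x ^ μ ≤ a x := by
    intro x hx
    have hx0 : (0:ℝ) < x := hx.1
    set h : ℝ → ℝ := fun y => a y * y ^ (-μ) with hh_def
    have hmem : ∀ y ∈ Set.Icc x 1, y ∈ Set.Ioc (0:ℝ) 1 := fun y hy =>
      ⟨lt_of_lt_of_le hx0 hy.1, hy.2⟩
    have hd : ∀ y ∈ Set.Ioc (0:ℝ) 1,
        HasDerivAt h (ad y * y ^ (-μ) + a y * (-μ * y ^ (-μ - 1))) y := by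
      intro y hy
      exact (hderiv y hy).mul (Real.hasDerivAt_rpow_const (Or.inl (ne_of_gt hy.1)))
    have hanti : AntitoneOn h (Set.Icc x 1) := by
      apply antitoneOn_of_deriv_nonpos (convex_Icc x 1)
      · apply ContinuousOn.mul (hcont.mono (fun y hy => ⟨le_of_lt (hmem y hy).1, hy.2⟩))
        intro y hy
        exact (Real.continuousAt_rpow_const y (-μ)
          (Or.inl (ne_of_gt (hmem y hy).1))).continuousWithinAt
      · intro y hy
        rw [interior_Icc] at hy
        exact ((hd y (hmem y (Ioo_subset_Icc_self hy))).differentiableAt).differentiableWithinAt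
      · intro y hy
        rw [interior_Icc] at hy
        have hy' := hmem y (Ioo_subset_Icc_self hy)
        rw [(hd y hy').deriv]
        have hy0 : (0:ℝ) < y := hy'.1
        have h1 : y * ad y ≤ μ * a y :=
          le_trans (le_trans (le_abs_self _) (by rw [abs_mul, abs_of_pos hy0])) (hμ y hy')
        have h2 : y ^ (-μ) = y ^ (-μ - 1) * y := by
          rw [← Real.rpow_add_one (ne_of_gt hy0) (-μ - 1)]
          ring_nf
        have h3 : (0:ℝ) ≤ y ^ (-μ - 1) := le_of_lt (Real.rpow_pos_of_pos hy0 _)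
        have : ad y * y ^ (-μ) + a y * (-μ * y ^ (-μ - 1))
            = (y * ad y - μ * a y) * y ^ (-μ - 1) := by rw [h2]; ring
        rw [this]
        exact mul_nonpos_of_nonpos_of_nonneg (by linarith) h3
    have := hanti (Set.left_mem_Icc.mpr hx.2) (Set.right_mem_Icc.mpr hx.2) hx.2
    have h1v : h 1 = a 1 := by simp [hh_def]
    have hxpow : (0:ℝ) < x ^ μ := Real.rpow_pos_of_pos hx0 _
    have hxneg : x ^ (-μ) = (x ^ μ)⁻¹ := by rw [Real.rpow_neg (le_of_lt hx0)]
    rw [h1v, hh_def] at this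
    simp only [hxneg] at this
    calc a 1 * x ^ μ ≤ (a x * (x ^ μ)⁻¹) * x ^ μ := by
          exact mul_le_mul_of_nonneg_right this (le_of_lt hxpow)
      _ = a x := by field_simp
  -- pointwise bound for vd
  have hbound : ∀ t ∈ Set.Ioo (0:ℝ) 1,
      |vd t| ≤ (2 + μ) * (a t * ud t ^ 2) + (a 1)⁻¹ * w t ^ 2 := by
    intro t ht
    have ht' : t ∈ Set.Ioc (0:ℝ) 1 := ⟨ht.1, le_of_lt ht.2⟩
    have ht0 : (0:ℝ) < t := ht.1
    have hat : (0:ℝ) < a t := hpos t ht'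
    have hsq : t ^ (2:ℝ) ≤ t ^ μ :=
      Real.rpow_le_rpow_of_exponent_ge ht0 (le_of_lt ht.2) (le_of_lt hμ2)
    have h2r : t ^ (2:ℝ) = t ^ (2:ℕ) := by
      rw [show (2:ℝ) = ((2:ℕ):ℝ) by norm_num, Real.rpow_natCast]
    have ht2 : a 1 * t ^ 2 ≤ a t := by
      refine le_trans ?_ (hlow t ht')
      rw [← h2r]
      exact mul_le_mul_of_nonneg_left hsq (le_of_lt ha1)
    have htw : t ^ 2 * w t ^ 2 * a 1 ≤ a t * w t ^ 2 := by
      nlinarith [sq_nonneg (w t)]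
    have had1 : t * ad t ≤ μ * a t :=
      le_trans (le_trans (le_abs_self _) (by rw [abs_mul, abs_of_pos ht0])) (hμ t ht')
    have key : |2 * t * ud t * w t| ≤ a t * ud t ^ 2 + (a 1)⁻¹ * w t ^ 2 := by
      have amgm : |2 * t * ud t * w t| * a t ≤ (a t * ud t ^ 2) * a t + t ^ 2 * w t ^ 2 := by
        rcases abs_cases (2 * t * ud t * w t) with ⟨he, _⟩ | ⟨he, _⟩ <;> rw [he] <;>
          nlinarith [sq_nonneg (a t * ud t - t * w t), sq_nonneg (a t * ud t + t * w t)]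
      have h3 : t ^ 2 * w t ^ 2 ≤ ((a 1)⁻¹ * w t ^ 2) * a t := by
        rw [mul_comm ((a 1)⁻¹ * w t ^ 2) (a t), ← mul_assoc]
        calc t ^ 2 * w t ^ 2 = t ^ 2 * w t ^ 2 * a 1 * (a 1)⁻¹ := by field_simp
          _ ≤ a t * w t ^ 2 * (a 1)⁻¹ := mul_le_mul_of_nonneg_right htw (by positivity)
          _ = a t * (a 1)⁻¹ * w t ^ 2 := by ring
      have hle := le_trans amgm (by linarith : (a t * ud t ^ 2) * a t + t ^ 2 * w t ^ 2
          ≤ (a t * ud t ^ 2) * a t + ((a 1)⁻¹ * w t ^ 2) * a t)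
      have h4 : (a t * ud t ^ 2) * a t + ((a 1)⁻¹ * w t ^ 2) * a t
          = (a t * ud t ^ 2 + (a 1)⁻¹ * w t ^ 2) * a t := by ring
      rw [h4] at hle
      exact le_of_mul_le_mul_right hle hat
    have habs : |a t * ud t ^ 2 + 2 * t * ud t * w t - t * ad t * ud t ^ 2|
        ≤ |a t * ud t ^ 2| + |2 * t * ud t * w t| + |t * ad t * ud t ^ 2| := by
      calc _ ≤ |a t * ud t ^ 2 + 2 * t * ud t * w t| + |t * ad t * ud t ^ 2| := abs_sub _ _
        _ ≤ _ := by gcongr; exact abs_add_le _ _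
    have h5 : |a t * ud t ^ 2| = a t * ud t ^ 2 := abs_of_nonneg (by positivity)
    have h6 : |t * ad t * ud t ^ 2| ≤ μ * (a t * ud t ^ 2) := by
      rw [abs_mul, abs_mul, abs_of_pos ht0, abs_of_nonneg (sq_nonneg (ud t))]
      calc t * |ad t| * ud t ^ 2 ≤ μ * a t * ud t ^ 2 :=
            mul_le_mul_of_nonneg_right (hμ t ht') (sq_nonneg _)
        _ = μ * (a t * ud t ^ 2) := by ring
    calc |vd t|
        ≤ |a t * ud t ^ 2| + |2 * t * ud t * w t| + |t * ad t * ud t ^ 2| := habs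
      _ ≤ a t * ud t ^ 2 + (a t * ud t ^ 2 + (a 1)⁻¹ * w t ^ 2) + μ * (a t * ud t ^ 2) := by
          rw [h5]; gcongr
      _ = (2 + μ) * (a t * ud t ^ 2) + (a 1)⁻¹ * w t ^ 2 := by ring
  -- vd is integrable
  have hint : MeasureTheory.IntegrableOn vd (Set.Ioo 0 1) := by
    have hsub : Set.Ioo (0:ℝ) 1 ⊆ Set.Ioc 0 1 := Ioo_subset_Ioc_self
    have haco : ContinuousOn a (Set.Ioo 0 1) := hcont.mono (Ioo_subset_Icc_self)
    have hgco : ContinuousOn (fun y => a y * ud y) (Set.Ioo 0 1) := fun x hx =>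
      ((hwderiv x (hsub hx)).continuousAt).continuousWithinAt
    have hudco : ContinuousOn ud (Set.Ioo 0 1) := by
      refine ContinuousOn.congr (ContinuousOn.div hgco haco
        (fun x hx => ne_of_gt (hpos x (hsub hx)))) ?_
      intro x hx
      exact (mul_div_cancel_left₀ (ud x) (ne_of_gt (hpos x (hsub hx)))).symm
    have hmeasA : AEStronglyMeasurable a (volume.restrict (Set.Ioo (0:ℝ) 1)) :=
      haco.aestronglyMeasurable measurableSet_Ioo
    have hmeasUd : AEStronglyMeasurable ud (volume.restrict (Set.Ioo (0:ℝ) 1)) :=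
      hudco.aestronglyMeasurable measurableSet_Ioo
    have hmeasW : AEStronglyMeasurable w (volume.restrict (Set.Ioo (0:ℝ) 1)) := by
      have : Measurable (deriv (fun y => a y * ud y)) := measurable_deriv _
      refine (this.aestronglyMeasurable).congr ?_
      rw [Filter.EventuallyEq, ae_restrict_iff' measurableSet_Ioo]
      exact ae_of_all _ fun x hx => ((hwderiv x (hsub hx)).deriv)
    have hmeasAd : AEStronglyMeasurable ad (volume.restrict (Set.Ioo (0:ℝ) 1)) := by
      have : Measurable (deriv a) := measurable_deriv _
      refine (this.aestronglyMeasurable).congr ?_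
      rw [Filter.EventuallyEq, ae_restrict_iff' measurableSet_Ioo]
      exact ae_of_all _ fun x hx => ((hderiv x (hsub hx)).deriv)
    have hmeasId : AEStronglyMeasurable (fun t : ℝ => t) (volume.restrict (Set.Ioo (0:ℝ) 1)) :=
      aestronglyMeasurable_id
    have hmeas : AEStronglyMeasurable vd (volume.restrict (Set.Ioo (0:ℝ) 1)) :=
      ((hmeasA.mul (hmeasUd.pow 2)).add
        (((hmeasId.const_mul 2).mul hmeasUd).mul hmeasW)).sub
        ((hmeasId.mul hmeasAd).mul (hmeasUd.pow 2))
    have hgint : MeasureTheory.IntegrableOn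
        (fun t => (2 + μ) * (a t * ud t ^ 2) + (a 1)⁻¹ * w t ^ 2) (Set.Ioo 0 1) :=
      (hud2.const_mul (2 + μ)).add (hw2.const_mul (a 1)⁻¹)
    refine hgint.mono' hmeas ?_
    rw [ae_restrict_iff' measurableSet_Ioo]
    exact ae_of_all _ fun t ht => by simpa [Real.norm_eq_abs] using hbound t ht
  -- v has derivative vd on Ioc 0 1
  have hvd : ∀ x ∈ Set.Ioc (0:ℝ) 1, HasDerivAt v (vd x) x := by
    intro x hx
    have hax : (0:ℝ) < a x := hpos x hx
    have haev : ∀ᶠ y in nhds x, 0 < a y :=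
      ((hderiv x hx).continuousAt).eventually (eventually_gt_nhds hax)
    have hg : HasDerivAt (fun y => a y * ud y) (w x) x := hwderiv x hx
    have hnum : HasDerivAt (fun y => y * (a y * ud y) ^ 2)
        (1 * (a x * ud x) ^ 2 + x * (2 * (a x * ud x) ^ 1 * w x)) x :=
      (hasDerivAt_id x).mul (hg.pow 2)
    have hphi : HasDerivAt (fun y => y * (a y * ud y) ^ 2 / a y)
        (((1 * (a x * ud x) ^ 2 + x * (2 * (a x * ud x) ^ 1 * w x)) * a x
          - x * (a x * ud x) ^ 2 * ad x) / a x ^ 2) x :=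
      hnum.div (hderiv x hx) (ne_of_gt hax)
    have heq : v =ᶠ[nhds x] (fun y => y * (a y * ud y) ^ 2 / a y) := by
      filter_upwards [haev] with y hy
      simp only [hv_def]
      field_simp
    have := hphi.congr_of_eventuallyEq heq
    refine this.congr_deriv ?_
    simp only [hvd_def]
    field_simp
  -- FTC
  have hvF : ∀ x ∈ Set.Ioc (0:ℝ) 1, v x = v 1 - ∫ t in x..1, vd t := by
    intro x hx
    have hII : IntervalIntegrable vd volume x 1 := by
      rw [intervalIntegrable_iff_integrableOn_Ioo_of_le hx.2]
      exact hint.mono_set (fun t ht => ⟨lt_trans hx.1 ht.1, ht.2⟩)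
    have := intervalIntegral.integral_eq_sub_of_hasDerivAt (f := v) (f' := vd) ?_ hII
    · linarith
    · intro t ht
      rw [Set.uIcc_of_le hx.2] at ht
      exact hvd t ⟨lt_of_lt_of_le hx.1 ht.1, ht.2⟩
  set F : ℝ → ℝ := fun x => ∫ t in x..1, vd t with hF_def
  have hF0 : Filter.Tendsto F (nhdsWithin 0 (Set.Ioi 0)) (nhds (F 0)) := by
    have hI : MeasureTheory.IntegrableOn vd (Set.uIcc (0:ℝ) 1) := by
      rw [Set.uIcc_of_le zero_le_one, integrableOn_Icc_iff_integrableOn_Ioo]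
      exact hint
    have hc := intervalIntegral.continuousOn_primitive_interval_left (f := vd)
      (a := (0:ℝ)) (b := 1) (μ := volume) hI
    have h0 : (0:ℝ) ∈ Set.uIcc (0:ℝ) 1 := Set.left_mem_uIcc
    have hc0 := (hc 0 h0)
    rw [Set.uIcc_of_le zero_le_one] at hc0
    refine hc0.tendsto.mono_left ?_
    rw [← nhdsWithin_Ioc_eq_nhdsGT one_pos]
    exact nhdsWithin_mono 0 Set.Ioc_subset_Icc_self
  have hvL : Filter.Tendsto v (nhdsWithin 0 (Set.Ioi 0)) (nhds (v 1 - F 0)) := by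
    have h1 : Filter.Tendsto (fun x => v 1 - F x) (nhdsWithin 0 (Set.Ioi 0))
        (nhds (v 1 - F 0)) := tendsto_const_nhds.sub hF0
    refine h1.congr' ?_
    filter_upwards [Ioc_mem_nhdsGT one_pos] with x hx
    exact (hvF x hx).symm
  have hL0 : 0 ≤ v 1 - F 0 := by
    refine ge_of_tendsto hvL ?_
    filter_upwards [Ioc_mem_nhdsGT one_pos] with x hx
    have := hpos x hx
    have := hx.1
    positivity
  have hLle : v 1 - F 0 ≤ 0 := by
    set L := v 1 - F 0 with hL_def
    by_contra hL
    push_neg at hL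
    have hev : ∀ᶠ x in nhdsWithin 0 (Set.Ioi (0:ℝ)), L / 2 < x * a x * ud x ^ 2 :=
      hvL.eventually (eventually_gt_nhds (half_lt_self hL))
    have hev2 : ∀ᶠ x in nhdsWithin 0 (Set.Ioi (0:ℝ)),
        x ∈ Set.Ioc (0:ℝ) 1 ∧ L / 2 < x * a x * ud x ^ 2 :=
      (Filter.eventually_mem_set.mpr (Ioc_mem_nhdsGT one_pos)).and hev
    rw [eventually_iff] at hev2
    rcases mem_nhdsGT_iff_exists_Ioc_subset.mp hev2 with ⟨ε, hε, hsub⟩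
    have hε0 : (0:ℝ) < ε := hε
    have hcontra : MeasureTheory.IntegrableOn (fun x : ℝ => x ^ (-1:ℝ)) (Set.Ioo 0 ε) := by
      have hε1 : ε ≤ 1 := (hsub ⟨hε0, le_refl ε⟩).1.2
      have hsubI : Set.Ioo (0:ℝ) ε ⊆ Set.Ioo 0 1 := fun x hx =>
        ⟨hx.1, lt_of_lt_of_le hx.2 hε1⟩
      have hgint : MeasureTheory.IntegrableOn (fun x => (2 / L) * (a x * ud x ^ 2))
          (Set.Ioo 0 ε) := (hud2.mono_set hsubI).const_mul _
      refine hgint.mono' ?_ ?_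
      · refine ContinuousOn.aestronglyMeasurable ?_ measurableSet_Ioo
        intro x hx
        exact (Real.continuousAt_rpow_const x (-1) (Or.inl (ne_of_gt hx.1))).continuousWithinAt
      · rw [ae_restrict_iff' measurableSet_Ioo]
        refine ae_of_all _ fun x hx => ?_
        have hx0 : (0:ℝ) < x := hx.1
        rcases hsub ⟨hx.1, le_of_lt hx.2⟩ with ⟨_, hv⟩
        have hA : (0:ℝ) ≤ a x * ud x ^ 2 := by
          nlinarith [mul_pos hx0 (lt_trans (half_pos hL) hv)]
        rw [Real.norm_eq_abs, Real.rpow_neg_one, abs_of_pos (inv_pos.mpr hx0)]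
        rw [inv_le_iff_one_le_mul₀ hx0]
        have h2 : L / 2 ≤ x * (a x * ud x ^ 2) := by nlinarith
        calc (1:ℝ) = (2 / L) * (L / 2) := by field_simp
          _ ≤ (2 / L) * (x * (a x * ud x ^ 2)) :=
              mul_le_mul_of_nonneg_left h2 (by positivity)
          _ = 2 / L * (a x * ud x ^ 2) * x := by ring
    rw [intervalIntegral.integrableOn_Ioo_rpow_iff hε0] at hcontra
    linarith
  have hL : v 1 - F 0 = 0 := le_antisymm hLle hL0
  rw [hL] at hvL
  exact hvL
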